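/- Along any C¹ curve s ↦ (a(s), l(s), Q(s), θ(s)) satisfying dθ = (sin θ / a) dl, da = −cos θ dl, dQ = 2(l + a cos θ) dl (with a(s) ≠ 0, sin θ(s) ≠ 0), the three functions a sin θ, l + a cos θ, and Q + 2a cos θ (l + a cos θ) are constant. -/

import Mathlib

/-- Along any C¹ curve satisfying dθ = (sin θ / a) dl, da = −cos θ dl and
dQ = 2(l + a cos θ) dl (with a ≠ 0, sin θ ≠ 0), the functions a sin θ,
l + a cos θ, and Q + 2a cos θ (l + a cos θ) are constant. -/
theorem second_degeneracy_first_integrals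
    (a l Q θ : ℝ → ℝ)
    (ha : Differentiable ℝ a) (hl : Differentiable ℝ l)
    (hQ : Differentiable ℝ Q) (hθ : Differentiable ℝ θ)
    (hane : ∀ s, a s ≠ 0) (hsin : ∀ s, Real.sin (θ s) ≠ 0)
    (hdθ : ∀ s, deriv θ s = Real.sin (θ s) / a s * deriv l s)
    (hda : ∀ s, deriv a s = -Real.cos (θ s) * deriv l s)
    (hdQ : ∀ s, deriv Q s = 2 * (l s + a s * Real.cos (θ s)) * deriv l s) :
    ∀ s t : ℝ,
      a s * Real.sin (θ s) = a t * Real.sin (θ t) ∧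
      l s + a s * Real.cos (θ s) = l t + a t * Real.cos (θ t) ∧
      Q s + 2 * a s * Real.cos (θ s) * (l s + a s * Real.cos (θ s))
        = Q t + 2 * a t * Real.cos (θ t) * (l t + a t * Real.cos (θ t)) := by
  have hsinD : Differentiable ℝ (fun s => Real.sin (θ s)) :=
    Real.differentiable_sin.comp hθ
  have hcosD : Differentiable ℝ (fun s => Real.cos (θ s)) :=
    Real.differentiable_cos.comp hθ
  have hsinHD : ∀ s, HasDerivAt (fun s => Real.sin (θ s))
      (Real.cos (θ s) * deriv θ s) s := fun s =>
    (Real.hasDerivAt_sin (θ s)).comp s (hθ s).hasDerivAt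
  have hcosHD : ∀ s, HasDerivAt (fun s => Real.cos (θ s))
      (-Real.sin (θ s) * deriv θ s) s := fun s =>
    (Real.hasDerivAt_cos (θ s)).comp s (hθ s).hasDerivAt
  -- f1 = a sin θ
  have hF1D : Differentiable ℝ (fun s => a s * Real.sin (θ s)) := ha.mul hsinD
  have hF1 : ∀ s, deriv (fun s => a s * Real.sin (θ s)) s = 0 := by
    intro s
    have h := ((ha s).hasDerivAt.mul (hsinHD s)).deriv
    erw [h]
    rw [hda s, hdθ s]
    have e : Real.sin (θ s) / a s = Real.sin (θ s) * (a s)⁻¹ := div_eq_mul_inv _ _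
    have e2 : a s * (a s)⁻¹ = 1 := mul_inv_cancel₀ (hane s)
    rw [e]
    linear_combination (Real.cos (θ s) * Real.sin (θ s) * deriv l s) * e2
  -- f2 = l + a cos θ
  have hF2D : Differentiable ℝ (fun s => l s + a s * Real.cos (θ s)) :=
    hl.add (ha.mul hcosD)
  have hF2 : ∀ s, deriv (fun s => l s + a s * Real.cos (θ s)) s = 0 := by
    intro s
    have h := ((hl s).hasDerivAt.add ((ha s).hasDerivAt.mul (hcosHD s))).deriv
    erw [h]
    rw [hda s, hdθ s]
    have hpyth := Real.sin_sq_add_cos_sq (θ s)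
    have e : Real.sin (θ s) / a s = Real.sin (θ s) * (a s)⁻¹ := div_eq_mul_inv _ _
    have e2 : a s * (a s)⁻¹ = 1 := mul_inv_cancel₀ (hane s)
    rw [e]
    linear_combination (-(deriv l s)) * hpyth - (Real.sin (θ s)^2 * deriv l s) * e2
  -- f3 = Q + 2 a cos θ (l + a cos θ)
  have hF3D : Differentiable ℝ
      (fun s => Q s + 2 * a s * Real.cos (θ s) * (l s + a s * Real.cos (θ s))) :=
    hQ.add (((differentiable_const 2 |>.mul ha).mul hcosD).mul (hl.add (ha.mul hcosD)))
  have hF3 : ∀ s, deriv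
      (fun s => Q s + 2 * a s * Real.cos (θ s) * (l s + a s * Real.cos (θ s))) s = 0 := by
    intro s
    have h := ((hQ s).hasDerivAt.add
      ((((hasDerivAt_const s (2:ℝ)).mul (ha s).hasDerivAt).mul (hcosHD s)).mul
        ((hl s).hasDerivAt.add ((ha s).hasDerivAt.mul (hcosHD s))))).deriv
    erw [h]
    simp only [Pi.mul_apply, Pi.add_apply]
    rw [hda s, hdθ s, hdQ s]
    have hpyth := Real.sin_sq_add_cos_sq (θ s)
    have e : Real.sin (θ s) / a s = Real.sin (θ s) * (a s)⁻¹ := div_eq_mul_inv _ _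
    have e2 : a s * (a s)⁻¹ = 1 := mul_inv_cancel₀ (hane s)
    rw [e]
    linear_combination
      (-(2 * l s * deriv l s + 4 * a s * Real.cos (θ s) * deriv l s)) * hpyth
      - (2 * Real.sin (θ s)^2 * deriv l s * l s
         + 4 * a s * Real.cos (θ s) * Real.sin (θ s)^2 * deriv l s) * e2
  intro s t
  refine ⟨is_const_of_deriv_eq_zero hF1D hF1 s t,
    is_const_of_deriv_eq_zero hF2D hF2 s t,
    is_const_of_deriv_eq_zero hF3D hF3 s t⟩
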